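/- arXiv:1711.07061 — 2 statements merged into one kernel-verified Lean document; each statement's English description precedes it below -/
import Mathlib

section
/- Let K ≥ 1 and L ≥ 0 be integers and ε₁,…,ε_K real numbers. Then ∫_{[0,∞)^K} Δ(y₁,…,y_K) · det( ₀F₁(1; ε_i y_j) )_{i,j=1}^K · ∏_{i=1}^K y_i^L e^{−y_i} dy = K! · (−1)^{KL + K(K−1)/2} · e^{∑_{i=1}^K ε_i} · det( π_{L+i−1}(−ε_j) )_{i,j=1}^K, where the matrix on the right has (i,j) entry π_{L+i−1}(−ε_j). (This is Proposition B.1 of the paper.) -/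
open MeasureTheory Finset Matrix

/-- The entire function `₀F₁(1;x) = ∑ xⁿ/(n!)²` (real argument). -/
noncomputable def f01 (x : ℝ) : ℝ := ∑' n : ℕ, x ^ n / ((n.factorial : ℝ)) ^ 2

/-- The entire function `₀F₁(1;x) = ∑ xⁿ/(n!)²` (complex argument). -/
noncomputable def f01C (x : ℂ) : ℂ := ∑' n : ℕ, x ^ n / ((n.factorial : ℂ)) ^ 2

/-- Vandermonde product `Δ(x₁,…,x_m) = ∏_{i<j} (x_j − x_i)`. -/
noncomputable def vand {m : ℕ} (x : Fin m → ℝ) : ℝ :=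
  ∏ p ∈ Finset.univ.filter (fun p : Fin m × Fin m => p.1 < p.2), (x p.2 - x p.1)

/-- The nonnegative orthant `[0,∞)^m`. -/
def orth (m : ℕ) : Set (Fin m → ℝ) := Set.univ.pi fun _ => Set.Ici (0 : ℝ)

/-- The joint density `Δ(x)·det(₀F₁(1;ω_k x_j))·∏ x_i^L e^{−x_i}` of the squared
singular values. -/
noncomputable def dens (N L : ℕ) (ω : Fin N → ℝ) (x : Fin N → ℝ) : ℝ :=
  vand x * Matrix.det (Matrix.of fun k j : Fin N => f01 (ω k * x j)) *
    ∏ i, (x i ^ L * Real.exp (-x i))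

/-- The matrix weight `w(X) = exp(−Tr(XX*)+Tr(ΩX)+Tr(X*Ω*))·det(X*X)^L`
(complex-valued; its value is in fact real). -/
noncomputable def W (N L : ℕ) (Ω X : Matrix (Fin N) (Fin N) ℂ) : ℂ :=
  Complex.exp (-Matrix.trace (X * Xᴴ) + Matrix.trace (Ω * X) + Matrix.trace (Xᴴ * Ωᴴ)) *
    Matrix.det (Xᴴ * X) ^ L

/-- Matrix-model average `⟨h⟩ = (∫ h(X) w(X) dX)/(∫ w(X) dX)`, the integrals being
over Lebesgue measure on the 2N² real coordinates of X. -/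
noncomputable def mavg (N L : ℕ) (Ω : Matrix (Fin N) (Fin N) ℂ)
    (h : Matrix (Fin N) (Fin N) ℂ → ℂ) : ℂ :=
  (∫ X : Fin N → Fin N → ℂ, h (Matrix.of X) * W N L Ω (Matrix.of X)) /
    ∫ X : Fin N → Fin N → ℂ, W N L Ω (Matrix.of X)

/-- Eigenvalue-ensemble average `E_{ω,L}[g]` with respect to the density `dens`. -/
noncomputable def Eavg (N L : ℕ) (ω : Fin N → ℝ) (g : (Fin N → ℝ) → ℂ) : ℂ :=
  (∫ x in orth N, g x * (dens N L ω x : ℂ)) /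
    ((∫ x in orth N, dens N L ω x : ℝ) : ℂ)

/-- The normalization `Ñ_L = ∫_{[0,∞)^L} ∏_{i,j}(t_i+ω_j)·Δ(t)²·∏ e^{−t_i} dt`. -/
noncomputable def Ntilde (N L : ℕ) (ω : Fin N → ℝ) : ℝ :=
  ∫ t in orth L, (∏ i, ∏ j, (t i + ω j)) * vand t ^ 2 * ∏ i, Real.exp (-(t i))

/-- The degenerate normalization `Ñ_L(ρ) = ∫_{[0,∞)^L} ∏ (t_i+ρ)^N·Δ(t)²·∏ e^{−t_i} dt`. -/
noncomputable def NtildeDeg (N L : ℕ) (ρ : ℝ) : ℝ :=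
  ∫ t in orth L, (∏ i, (t i + ρ) ^ N) * vand t ^ 2 * ∏ i, Real.exp (-(t i))

/-- The Laguerre polynomial `L_n(x) = ∑_{k=0}^n (n choose k)(−x)^k/k!`. -/
noncomputable def laguerre (n : ℕ) (x : ℝ) : ℝ :=
  ∑ k ∈ Finset.range (n + 1), (n.choose k : ℝ) * (-x) ^ k / (k.factorial : ℝ)

/-- The monic Laguerre polynomial `π_n(x) = (−1)^n n! L_n(x)`. -/
noncomputable def piL (n : ℕ) (x : ℝ) : ℝ := (-1 : ℝ) ^ n * (n.factorial : ℝ) * laguerre n x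

/-- The Bessel function `J_k(x) = ∑_m (−1)^m (x/2)^{2m+k}/(m!(m+k)!)`. -/
noncomputable def besselJ (k : ℕ) (x : ℝ) : ℝ :=
  ∑' m : ℕ, (-1 : ℝ) ^ m * (x / 2) ^ (2 * m + k) / ((m.factorial : ℝ) * ((m + k).factorial : ℝ))

/-- The moment matrix `G_{i,j} = (i−1)!·e^{ω_j}·L_{i−1}(−ω_j)` (0-based indices). -/
noncomputable def Gmat (N : ℕ) (ω : Fin N → ℝ) : Matrix (Fin N) (Fin N) ℝ :=
  Matrix.of fun i j => ((i : ℕ).factorial : ℝ) * Real.exp (ω j) * laguerre (i : ℕ) (-ω j)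


lemma f01_summable (x : ℝ) : Summable (fun n : ℕ => x ^ n / ((n.factorial : ℝ)) ^ 2) := by
  apply Summable.of_norm
  refine Summable.of_nonneg_of_le (fun n => norm_nonneg _) (fun n => ?_)
    (Real.summable_pow_div_factorial |x|)
  rw [norm_div, norm_pow, Real.norm_eq_abs, Real.norm_eq_abs, abs_pow]
  have h1 : (0:ℝ) < n.factorial := by positivity
  have h2 : (1:ℝ) ≤ n.factorial := by
    exact_mod_cast Nat.one_le_iff_ne_zero.mpr n.factorial_ne_zero
  rw [abs_of_nonneg (le_of_lt h1)]
  apply div_le_div_of_nonneg_left (by positivity) h1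
  nlinarith

lemma measurable_f01 : Measurable f01 := by
  apply measurable_of_tendsto_metrizable' (f := fun N x => ∑ n ∈ Finset.range N, x ^ n / ((n.factorial : ℝ)) ^ 2) Filter.atTop
  · intro i; fun_prop
  · rw [tendsto_pi_nhds]
    exact fun x => (f01_summable x).hasSum.tendsto_sum_nat

lemma exp_eq_tsum_real (x : ℝ) : Real.exp x = ∑' n : ℕ, x ^ n / (n.factorial : ℝ) := by
  rw [Real.exp_eq_exp_ℝ, NormedSpace.exp_eq_tsum_div]

lemma exp_summable (x : ℝ) : Summable (fun n : ℕ => x ^ n / (n.factorial : ℝ)) :=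
  Real.summable_pow_div_factorial x

lemma pow_div_factorial_le_exp {t : ℝ} (ht : 0 ≤ t) (n : ℕ) :
    t ^ n / (n.factorial : ℝ) ≤ Real.exp t := by
  rw [exp_eq_tsum_real]
  exact Summable.le_tsum (exp_summable t) n (fun m _ => by positivity)

lemma f01_abs_le (x : ℝ) : |f01 x| ≤ f01 |x| := by
  rw [f01, f01]
  have := norm_tsum_le_tsum_norm (f := fun n : ℕ => x ^ n / ((n.factorial : ℝ)) ^ 2)
    ((f01_summable x).norm)
  rw [Real.norm_eq_abs] at this
  refine this.trans_eq (tsum_congr fun n => ?_)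
  rw [Real.norm_eq_abs, abs_div, abs_pow, abs_pow,
    abs_of_nonneg (by positivity : (0:ℝ) ≤ (n.factorial:ℝ))]

lemma f01_le_exp {t x : ℝ} (ht : 0 < t) (hx : 0 ≤ x) :
    f01 x ≤ Real.exp t * Real.exp (x / t) := by
  rw [f01, Real.exp_eq_exp_ℝ, NormedSpace.exp_eq_tsum_div, ← tsum_mul_left]
  refine Summable.tsum_le_tsum (fun n => ?_) (f01_summable x)
    ((Real.summable_pow_div_factorial (x/t)).mul_left _)
  have h1 : (0:ℝ) < n.factorial := by positivity
  have key : x ^ n / ((n.factorial : ℝ))^2 = (t ^ n / n.factorial) * ((x/t) ^ n / n.factorial) := by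
    field_simp
    rw [← mul_pow]
    congr 1
    field_simp
  rw [key]
  have h2 : (0:ℝ) ≤ (x/t) ^ n / n.factorial := by positivity
  exact mul_le_mul_of_nonneg_right (Summable.le_tsum (exp_summable t) n (fun m _ => by positivity)) h2

open Set in

lemma integrableOn_pow_exp_half (k : ℕ) :
    IntegrableOn (fun y : ℝ => y ^ k * Real.exp (-((1:ℝ)/2) * y)) (Ioi 0) := by
  have h := integrableOn_rpow_mul_exp_neg_mul_rpow (p := 1) (s := k) (b := 1/2)
    (by linarith [Nat.cast_nonneg (α := ℝ) k]) (by norm_num) (by norm_num)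
  refine h.congr_fun (fun y hy => ?_) measurableSet_Ioi
  beta_reduce
  rw [Real.rpow_one, Real.rpow_natCast]

open Set in

lemma integrableOn_pow_exp (k : ℕ) :
    IntegrableOn (fun y : ℝ => y ^ k * Real.exp (-y)) (Ioi 0) := by
  have h := Real.GammaIntegral_convergent (s := k + 1) (by positivity)
  refine h.congr_fun (fun y hy => ?_) measurableSet_Ioi
  beta_reduce
  rw [show ((k:ℝ) + 1 - 1) = (k:ℝ) by ring, Real.rpow_natCast, mul_comm]

open Set in

lemma integral_pow_exp (k : ℕ) :
    ∫ y in Ioi (0:ℝ), y ^ k * Real.exp (-y) = (k.factorial : ℝ) := by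
  have h := Real.integral_rpow_mul_exp_neg_mul_Ioi (a := k + 1) (r := 1)
    (by positivity) one_pos
  rw [show ((1:ℝ)/1) = 1 by norm_num, Real.one_rpow, one_mul,
    Real.Gamma_nat_eq_factorial k] at h
  rw [← h]
  refine setIntegral_congr_fun measurableSet_Ioi (fun y hy => ?_)
  rw [show ((k:ℝ) + 1 - 1) = (k:ℝ) by ring, Real.rpow_natCast, one_mul]

open Set in

lemma integrableOn_h (n : ℕ) (a : ℝ) :
    IntegrableOn (fun y : ℝ => y ^ n * Real.exp (-y) * f01 (a * y)) (Ioi 0) := by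
  set t : ℝ := 2 * (|a| + 1) with ht_def
  have ht : 0 < t := by positivity
  apply Integrable.mono' ((integrableOn_pow_exp_half n).const_mul (Real.exp t))
  · apply Measurable.aestronglyMeasurable
    exact ((measurable_id.pow_const n).mul (measurable_id.neg.exp)).mul
      (measurable_f01.comp (measurable_const.mul measurable_id))
  · filter_upwards [ae_restrict_mem measurableSet_Ioi] with y hy
    have hy0 : (0:ℝ) ≤ y := le_of_lt hy
    have h1 : |f01 (a * y)| ≤ Real.exp t * Real.exp (|a| * y / t) := by
      refine (f01_abs_le _).trans ?_
      rw [abs_mul, abs_of_nonneg hy0]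
      exact f01_le_exp ht (by positivity)
    have h2 : |a| * y / t ≤ y / 2 := by
      rw [div_le_div_iff₀ ht (by norm_num)]
      have : |a| ≤ |a| + 1 := by linarith
      nlinarith [abs_nonneg a]
    rw [norm_mul, norm_mul, Real.norm_eq_abs, Real.norm_eq_abs, Real.norm_eq_abs,
      abs_pow, abs_of_nonneg hy0, abs_of_nonneg (Real.exp_pos (-y)).le]
    calc y ^ n * Real.exp (-y) * |f01 (a * y)|
        ≤ y ^ n * Real.exp (-y) * (Real.exp t * Real.exp (y / 2)) := by
          refine mul_le_mul_of_nonneg_left (h1.trans ?_) (by positivity)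
          exact mul_le_mul_of_nonneg_left (Real.exp_le_exp.mpr h2) (Real.exp_pos t).le
      _ = Real.exp t * (y ^ n * Real.exp (-((1:ℝ)/2) * y)) := by
          rw [show Real.exp (-((1:ℝ)/2) * y) = Real.exp (-y) * Real.exp (y/2) by
            rw [← Real.exp_add]; congr 1; ring]
          ring

lemma factorial_add_le (n m : ℕ) :
    ((n + m).factorial : ℝ) ≤ 2 ^ (n + m) * n.factorial * m.factorial := by
  have h1 : (n + m).choose m * n.factorial * m.factorial = (n + m).factorial := by
    have := Nat.add_choose_mul_factorial_mul_factorial n m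
    simpa using this
  have h2 : (n + m).choose m ≤ 2 ^ (n + m) := by
    calc (n + m).choose m ≤ ∑ k ∈ Finset.range (n + m + 1), (n + m).choose k :=
          Finset.single_le_sum (fun k _ => Nat.zero_le _)
            (Finset.mem_range.mpr (by omega))
      _ = 2 ^ (n + m) := Nat.sum_range_choose (n + m)
  calc ((n + m).factorial : ℝ) = ((n + m).choose m : ℝ) * n.factorial * m.factorial := by
        exact_mod_cast h1.symm
    _ ≤ 2 ^ (n + m) * n.factorial * m.factorial := by
        have : ((n + m).choose m : ℝ) ≤ 2 ^ (n + m) := by exact_mod_cast h2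
        have hn : (0:ℝ) ≤ n.factorial := by positivity
        have hm : (0:ℝ) ≤ m.factorial := by positivity
        exact mul_le_mul_of_nonneg_right (mul_le_mul_of_nonneg_right this hn) hm

lemma summable_coeff (n : ℕ) (a : ℝ) :
    Summable (fun m : ℕ => |a| ^ m / ((m.factorial : ℝ))^2 * ((n + m).factorial : ℝ)) := by
  refine Summable.of_nonneg_of_le (fun m => by positivity) (fun m => ?_)
    (((Real.summable_pow_div_factorial (2 * |a|)).mul_left ((2:ℝ) ^ n * (n.factorial:ℝ))))
  have hm : (0:ℝ) < m.factorial := by positivity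
  calc |a| ^ m / ((m.factorial : ℝ))^2 * ((n + m).factorial : ℝ)
      ≤ |a| ^ m / ((m.factorial : ℝ))^2 * (2 ^ (n + m) * n.factorial * m.factorial) := by
        refine mul_le_mul_of_nonneg_left (factorial_add_le n m) (by positivity)
    _ = 2 ^ n * n.factorial * ((2 * |a|) ^ m / m.factorial) := by
        rw [pow_add, mul_pow]
        field_simp

open Set in

lemma integral_h_tsum (n : ℕ) (a : ℝ) :
    ∫ y in Ioi (0:ℝ), y ^ n * Real.exp (-y) * f01 (a * y)
      = ∑' m : ℕ, a ^ m / ((m.factorial : ℝ))^2 * ((n + m).factorial : ℝ) := by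
  set F : ℕ → ℝ → ℝ := fun m y => a ^ m / ((m.factorial:ℝ))^2 * (y ^ (n + m) * Real.exp (-y))
    with hF
  have hpt : ∀ y : ℝ, y ^ n * Real.exp (-y) * f01 (a * y) = ∑' m, F m y := by
    intro y
    rw [f01, ← tsum_mul_left]
    exact tsum_congr fun m => by rw [hF]; simp only; rw [mul_pow, pow_add]; ring
  have hint : ∀ m, Integrable (F m) (volume.restrict (Ioi (0:ℝ))) := fun m =>
    (integrableOn_pow_exp (n + m)).const_mul _
  have hval : ∀ m, ∫ y in Ioi (0:ℝ), F m y
      = a ^ m / ((m.factorial:ℝ))^2 * ((n + m).factorial : ℝ) := by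
    intro m
    rw [hF]
    simp only
    rw [integral_const_mul, integral_pow_exp]
  have hnorm : ∀ m, ∫ y in Ioi (0:ℝ), ‖F m y‖
      = |a| ^ m / ((m.factorial:ℝ))^2 * ((n + m).factorial : ℝ) := by
    intro m
    have : ∀ y ∈ Ioi (0:ℝ), ‖F m y‖
        = |a| ^ m / ((m.factorial:ℝ))^2 * (y ^ (n + m) * Real.exp (-y)) := by
      intro y hy
      have hy0 : (0:ℝ) ≤ y := le_of_lt hy
      rw [hF]
      simp only [Real.norm_eq_abs, abs_mul, abs_div, abs_pow, abs_pow,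
        abs_of_nonneg hy0, abs_of_nonneg (Real.exp_pos (-y)).le,
        abs_of_nonneg (by positivity : (0:ℝ) ≤ (m.factorial:ℝ))]
    rw [setIntegral_congr_fun measurableSet_Ioi this, integral_const_mul, integral_pow_exp]
  have hsum : Summable fun m => ∫ y in Ioi (0:ℝ), ‖F m y‖ := by
    refine Summable.congr (summable_coeff n a) (fun m => (hnorm m).symm)
  have := MeasureTheory.integral_tsum_of_summable_integral_norm hint hsum
  rw [show (fun y => y ^ n * Real.exp (-y) * f01 (a * y)) = fun y => ∑' m, F m y from
    funext hpt] at *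
  rw [← this]
  exact tsum_congr hval

lemma series_eq (n : ℕ) (a : ℝ) :
    (∑' m : ℕ, a ^ m / ((m.factorial : ℝ))^2 * ((n + m).factorial : ℝ))
      = (n.factorial : ℝ) * Real.exp a * laguerre n (-a) := by
  set p : ℕ → ℝ := fun k => (n.factorial : ℝ) * (n.choose k : ℝ) * a ^ k / (k.factorial : ℝ)
    with hp
  set q : ℕ → ℝ := fun j => a ^ j / (j.factorial : ℝ) with hq
  have hp_supp : ∀ k ∉ Finset.range (n + 1), p k = 0 := by
    intro k hk
    rw [hp]
    simp only
    rw [Nat.choose_eq_zero_of_lt (by simpa using Finset.mem_range.not.mp hk)]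
    simp
  have hp_norm : Summable (fun k => ‖p k‖) := summable_of_ne_finset_zero
    (s := Finset.range (n+1)) (fun k hk => by rw [hp_supp k hk]; simp)
  have hq_norm : Summable (fun j => ‖q j‖) := by
    have := Real.summable_pow_div_factorial |a|
    refine this.congr fun j => ?_
    rw [hq]
    simp only [Real.norm_eq_abs, abs_div, abs_pow]
    rw [abs_of_nonneg (by positivity : (0:ℝ) ≤ (j.factorial:ℝ))]
  have hpq : ((∑' k, p k) * ∑' j, q j)
      = ∑' m : ℕ, ∑ ij ∈ Finset.HasAntidiagonal.antidiagonal m, p ij.1 * q ij.2 :=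
    tsum_mul_tsum_eq_tsum_sum_antidiagonal_of_summable_norm hp_norm hq_norm
  have hP : (∑' k, p k) = (n.factorial : ℝ) * laguerre n (-a) := by
    rw [tsum_eq_sum hp_supp, laguerre, Finset.mul_sum]
    refine Finset.sum_congr rfl fun k _ => ?_
    rw [hp]; simp only [neg_neg]; ring
  have hQ : (∑' j, q j) = Real.exp a := (exp_eq_tsum_real a).symm
  have hterm : ∀ m : ℕ, (∑ ij ∈ Finset.HasAntidiagonal.antidiagonal m, p ij.1 * q ij.2)
      = a ^ m / ((m.factorial : ℝ))^2 * ((n + m).factorial : ℝ) := by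
    intro m
    rw [Finset.Nat.sum_antidiagonal_eq_sum_range_succ (fun i j => p i * q j)]
    have key : ∀ k ∈ Finset.range (m + 1), p k * q (m - k)
        = ((n.factorial : ℝ) * a ^ m / ((m.factorial : ℝ))^2)
          * ((n.choose k : ℝ) * (m.choose k : ℝ) * (m.factorial : ℝ)) := by
      intro k hk
      have hkm : k ≤ m := by
        have := Finset.mem_range.mp hk; omega
      rw [hp, hq]
      simp only
      have hpow : a ^ k * a ^ (m - k) = a ^ m := by
        rw [← pow_add]; congr 1; omega
      have hc : (m.choose k : ℝ) * (k.factorial : ℝ) * ((m - k).factorial : ℝ)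
          = (m.factorial : ℝ) := by
        exact_mod_cast Nat.choose_mul_factorial_mul_factorial hkm
      have h1 : (k.factorial:ℝ) ≠ 0 := by positivity
      have h2 : ((m-k).factorial:ℝ) ≠ 0 := by positivity
      have h3 : (m.factorial:ℝ) ≠ 0 := by positivity
      field_simp
      rw [← hpow, ← hc]
      ring
    rw [Finset.sum_congr rfl key, ← Finset.mul_sum]
    have hvdm : (∑ k ∈ Finset.range (m + 1), (n.choose k : ℝ) * ((m.choose k : ℝ) * (m.factorial : ℝ)))
        = ((n + m).choose m : ℝ) * (m.factorial : ℝ) := by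
      have hstep : (∑ k ∈ Finset.range (m + 1), (n.choose k : ℝ) * ((m.choose k : ℝ) * (m.factorial : ℝ)))
          = (∑ k ∈ Finset.range (m + 1), (n.choose k : ℝ) * (m.choose k : ℝ)) * (m.factorial : ℝ) := by
        rw [Finset.sum_mul]
        exact Finset.sum_congr rfl fun k _ => by ring
      rw [hstep]
      congr 1
      have h := Nat.add_choose_eq n m m
      rw [Finset.Nat.sum_antidiagonal_eq_sum_range_succ (fun i j => n.choose i * m.choose j)] at h
      have h2 : ∀ k ∈ Finset.range (m + 1), n.choose k * m.choose (m - k) = n.choose k * m.choose k := by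
        intro k hk
        have hkm : k ≤ m := by
          have := Finset.mem_range.mp hk; omega
        rw [Nat.choose_symm hkm]
      rw [Finset.sum_congr rfl h2] at h
      exact_mod_cast congrArg (Nat.cast (R := ℝ)) h.symm
    have key2 : ∀ k ∈ Finset.range (m+1),
        ((n.choose k : ℝ) * (m.choose k : ℝ) * (m.factorial : ℝ))
        = (n.choose k : ℝ) * ((m.choose k : ℝ) * (m.factorial : ℝ)) := fun k _ => by ring
    rw [Finset.sum_congr rfl key2, hvdm]
    have hfac : ((n + m).choose m : ℝ) * (n.factorial : ℝ) * (m.factorial : ℝ)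
        = ((n + m).factorial : ℝ) := by
      exact_mod_cast Nat.add_choose_mul_factorial_mul_factorial n m
    have h3 : (m.factorial:ℝ) ≠ 0 := by positivity
    field_simp
    rw [← hfac]
    ring
  rw [tsum_congr hterm] at hpq
  rw [← hpq, hP, hQ]
  ring

lemma integrableOn_h_Ici (n : ℕ) (a : ℝ) :
    IntegrableOn (fun y : ℝ => y ^ n * Real.exp (-y) * f01 (a * y)) (Set.Ici 0) :=
  Iff.mpr integrableOn_Ici_iff_integrableOn_Ioi (integrableOn_h n a)

lemma integral_h_Ici (n : ℕ) (a : ℝ) :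
    ∫ y in Set.Ici (0:ℝ), y ^ n * Real.exp (-y) * f01 (a * y)
      = (n.factorial : ℝ) * Real.exp a * laguerre n (-a) := by
  rw [MeasureTheory.integral_Ici_eq_integral_Ioi, integral_h_tsum, series_eq]

lemma measurableSet_orth (K : ℕ) : MeasurableSet (orth K) :=
  MeasurableSet.univ_pi fun _ => measurableSet_Ici

lemma indicator_orth_prod {K : ℕ} (g : Fin K → ℝ → ℝ) :
    (orth K).indicator (fun y => ∏ j, g j (y j))
      = fun y => ∏ j, (Set.Ici (0:ℝ)).indicator (g j) (y j) := by
  funext y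
  by_cases hy : y ∈ orth K
  · rw [Set.indicator_of_mem hy]
    refine Finset.prod_congr rfl fun j _ => ?_
    rw [Set.indicator_of_mem (hy j (Set.mem_univ j))]
  · rw [Set.indicator_of_notMem hy]
    rw [orth, Set.mem_univ_pi] at hy
    push_neg at hy
    obtain ⟨j, hj⟩ := hy
    exact (Finset.prod_eq_zero (Finset.mem_univ j)
      (by rw [Set.indicator_of_notMem hj])).symm

lemma integrable_indicator_prod {K : ℕ} (g : Fin K → ℝ → ℝ)
    (hg : ∀ j, IntegrableOn (g j) (Set.Ici 0)) :
    Integrable ((orth K).indicator (fun y => ∏ j, g j (y j))) := by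
  rw [indicator_orth_prod]
  exact Integrable.fintype_prod fun j =>
    (integrable_indicator_iff measurableSet_Ici).mpr (hg j)

lemma integral_orth_prod {K : ℕ} (g : Fin K → ℝ → ℝ)
    (hg : ∀ j, IntegrableOn (g j) (Set.Ici 0)) :
    (∫ y in orth K, ∏ j, g j (y j)) = ∏ j, ∫ t in Set.Ici (0:ℝ), g j t := by
  rw [← MeasureTheory.integral_indicator (measurableSet_orth K), indicator_orth_prod]
  beta_reduce
  rw [MeasureTheory.volume_pi, MeasureTheory.integral_fintype_prod_eq_prod
    (f := fun j => (Set.Ici (0:ℝ)).indicator (g j))]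
  exact Finset.prod_congr rfl fun j _ => MeasureTheory.integral_indicator measurableSet_Ici

lemma vand_eq {K : ℕ} (y : Fin K → ℝ) : vand y = Matrix.det (Matrix.vandermonde y) := by
  rw [Matrix.det_vandermonde, vand, Finset.prod_sigma']
  refine Finset.prod_bij' (fun p _ => (⟨p.1, p.2⟩ : Σ _ : Fin K, Fin K))
    (fun x _ => (x.1, x.2)) ?_ ?_ ?_ ?_ ?_
  · intro p hp
    simp only [Finset.mem_sigma, Finset.mem_univ, true_and, Finset.mem_Ioi]
    exact (Finset.mem_filter.mp hp).2
  · intro x hx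
    simp only [Finset.mem_filter, Finset.mem_univ, true_and]
    exact Finset.mem_Ioi.mp (Finset.mem_sigma.mp hx).2
  · intro p _; rfl
  · intro x _; rfl
  · intro p _; rfl

theorem statement13 (K L : ℕ) (hK : 1 ≤ K) (ε : Fin K → ℝ) :
    (∫ y in orth K,
      vand y * Matrix.det (Matrix.of fun i j : Fin K => f01 (ε i * y j)) *
        ∏ i, (y i ^ L * Real.exp (-(y i)))) =
      (K.factorial : ℝ) * (-1 : ℝ) ^ (K * L + K * (K - 1) / 2) *
        Real.exp (∑ i, ε i) *
        Matrix.det (Matrix.of fun i j : Fin K => piL (L + (i : ℕ)) (-ε j)) := by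
  classical
  set g : Fin K → Fin K → ℝ → ℝ :=
    fun i k t => t ^ (L + (i:ℕ)) * Real.exp (-t) * f01 (ε k * t) with hg
  set M : Matrix (Fin K) (Fin K) ℝ :=
    Matrix.of (fun i k => ((L + (i:ℕ)).factorial : ℝ) * Real.exp (ε k)
      * laguerre (L + (i:ℕ)) (-ε k)) with hM
  -- Step 1 : pointwise expansion of the integrand
  have hpt : ∀ y : Fin K → ℝ,
      vand y * Matrix.det (Matrix.of fun i j : Fin K => f01 (ε i * y j)) *
        ∏ i, (y i ^ L * Real.exp (-(y i)))
      = ∑ σ : Equiv.Perm (Fin K), ∑ τ : Equiv.Perm (Fin K),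
          (((Equiv.Perm.sign σ : ℤ) : ℝ) * ((Equiv.Perm.sign τ : ℤ) : ℝ)) *
            ∏ j, g (σ j) (τ j) (y j) := by
    intro y
    rw [vand_eq, ← Matrix.det_transpose (Matrix.vandermonde y),
      Matrix.det_apply' (Matrix.vandermonde y)ᵀ, Matrix.det_apply', Finset.sum_mul_sum,
      Finset.sum_mul]
    refine Finset.sum_congr rfl fun σ _ => ?_
    rw [Finset.sum_mul]
    refine Finset.sum_congr rfl fun τ _ => ?_
    have : (∏ i, (Matrix.vandermonde y)ᵀ (σ i) i) * (∏ i, (Matrix.of fun i j : Fin K => f01 (ε i * y j)) (τ i) i)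
        * ∏ i, (y i ^ L * Real.exp (-(y i))) = ∏ j, g (σ j) (τ j) (y j) := by
      rw [← Finset.prod_mul_distrib, ← Finset.prod_mul_distrib]
      refine Finset.prod_congr rfl fun j _ => ?_
      simp only [Matrix.transpose_apply, Matrix.vandermonde_apply, Matrix.of_apply, hg]
      rw [pow_add]
      ring
    rw [← this]
    ring
  rw [MeasureTheory.setIntegral_congr_fun (measurableSet_orth K) (fun y _ => hpt y)]
  -- Step 2 : swap integral and double sum, and integrate each product
  have hint : ∀ (σ τ : Equiv.Perm (Fin K)),
      IntegrableOn (fun y : Fin K → ℝ =>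
        (((Equiv.Perm.sign σ : ℤ) : ℝ) * ((Equiv.Perm.sign τ : ℤ) : ℝ)) *
          ∏ j, g (σ j) (τ j) (y j)) (orth K) := by
    intro σ τ
    refine Integrable.const_mul ?_ _
    exact (integrable_indicator_iff (measurableSet_orth K)).mp
      (integrable_indicator_prod _ (fun j => integrableOn_h_Ici (L + ((σ j):ℕ)) (ε (τ j))))
  rw [MeasureTheory.integral_finset_sum _ (fun σ _ =>
    MeasureTheory.integrable_finset_sum _ (fun τ _ => hint σ τ))]
  have hval : ∀ (σ τ : Equiv.Perm (Fin K)),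
      (∫ y in orth K, (((Equiv.Perm.sign σ : ℤ) : ℝ) * ((Equiv.Perm.sign τ : ℤ) : ℝ)) *
          ∏ j, g (σ j) (τ j) (y j))
      = (((Equiv.Perm.sign σ : ℤ) : ℝ) * ((Equiv.Perm.sign τ : ℤ) : ℝ)) *
          ∏ j, M (σ j) (τ j) := by
    intro σ τ
    rw [MeasureTheory.integral_const_mul, integral_orth_prod _
      (fun j => integrableOn_h_Ici (L + ((σ j):ℕ)) (ε (τ j)))]
    congr 1
    refine Finset.prod_congr rfl fun j _ => ?_
    rw [integral_h_Ici (L + ((σ j):ℕ)) (ε (τ j))]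
    rfl
  have hswap : (∑ σ : Equiv.Perm (Fin K), ∫ y in orth K,
      ∑ τ : Equiv.Perm (Fin K), (((Equiv.Perm.sign σ : ℤ) : ℝ) * ((Equiv.Perm.sign τ : ℤ) : ℝ)) *
        ∏ j, g (σ j) (τ j) (y j))
      = ∑ σ : Equiv.Perm (Fin K), ∑ τ : Equiv.Perm (Fin K),
          (((Equiv.Perm.sign σ : ℤ) : ℝ) * ((Equiv.Perm.sign τ : ℤ) : ℝ)) *
            ∏ j, M (σ j) (τ j) := by
    refine Finset.sum_congr rfl fun σ _ => ?_
    rw [MeasureTheory.integral_finset_sum _ (fun τ _ => hint σ τ)]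
    exact Finset.sum_congr rfl fun τ _ => hval σ τ
  rw [hswap]
  -- Step 3 : the double sum over permutations equals K! · det M
  have step3 : (∑ σ : Equiv.Perm (Fin K), ∑ τ : Equiv.Perm (Fin K),
      (((Equiv.Perm.sign σ : ℤ) : ℝ) * ((Equiv.Perm.sign τ : ℤ) : ℝ)) *
        ∏ j, M (σ j) (τ j))
      = (K.factorial : ℝ) * Matrix.det M := by
    rw [Finset.sum_comm]
    have inner : ∀ τ : Equiv.Perm (Fin K),
        (∑ σ : Equiv.Perm (Fin K),
          (((Equiv.Perm.sign σ : ℤ) : ℝ) * ((Equiv.Perm.sign τ : ℤ) : ℝ)) *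
            ∏ j, M (σ j) (τ j)) = Matrix.det M := by
      intro τ
      rw [← Equiv.sum_comp (Equiv.mulRight τ)
        (fun σ => (((Equiv.Perm.sign σ : ℤ) : ℝ) * ((Equiv.Perm.sign τ : ℤ) : ℝ)) *
            ∏ j, M (σ j) (τ j))]
      rw [Matrix.det_apply' M]
      refine Finset.sum_congr rfl fun ρ _ => ?_
      simp only [Equiv.coe_mulRight, Equiv.Perm.mul_apply]
      have hsign : (((Equiv.Perm.sign (ρ * τ) : ℤ) : ℝ) * ((Equiv.Perm.sign τ : ℤ) : ℝ))
          = ((Equiv.Perm.sign ρ : ℤ) : ℝ) := by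
        rw [Equiv.Perm.sign_mul]
        push_cast
        rcases Int.units_eq_one_or (Equiv.Perm.sign τ) with h | h <;> rw [h] <;> simp
      rw [hsign]
      congr 1
      exact Equiv.prod_comp τ (fun i => M (ρ i) i)
    rw [Finset.sum_congr rfl (fun τ _ => inner τ), Finset.sum_const, Finset.card_univ,
      Fintype.card_perm, Fintype.card_fin, nsmul_eq_mul]
  rw [step3]
  -- Step 4 : compute det M
  have hdet : Matrix.det M = Real.exp (∑ i, ε i) * ((-1 : ℝ) ^ (K * L + K * (K - 1) / 2) *
      Matrix.det (Matrix.of fun i j : Fin K => piL (L + (i : ℕ)) (-ε j))) := by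
    have h1 : M = Matrix.of (fun (i k : Fin K) => Real.exp (ε k) *
        (((L + (i:ℕ)).factorial : ℝ) * laguerre (L + (i:ℕ)) (-ε k))) := by
      ext i k
      rw [hM]
      simp only [Matrix.of_apply]
      ring
    rw [h1, Matrix.det_mul_row (fun k => Real.exp (ε k))
      (fun (i k : Fin K) => ((L + (i:ℕ)).factorial : ℝ) * laguerre (L + (i:ℕ)) (-ε k)), ← Real.exp_sum]
    congr 1
    have h2 : ((fun (i k : Fin K) => ((L + (i:ℕ)).factorial : ℝ) * laguerre (L + (i:ℕ)) (-ε k)) :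
          Matrix (Fin K) (Fin K) ℝ)
        = Matrix.of (fun (i k : Fin K) => ((-1:ℝ)) ^ (L + (i:ℕ)) * piL (L + (i:ℕ)) (-ε k)) := by
      ext i k
      simp only [Matrix.of_apply, piL]
      rw [← mul_assoc, ← mul_assoc, ← pow_add, ← two_mul, pow_mul]
      norm_num
    rw [h2, Matrix.det_mul_column (fun i : Fin K => ((-1:ℝ)) ^ (L + (i:ℕ)))
      (fun (i k : Fin K) => piL (L + (i:ℕ)) (-ε k))]
    congr 1
    rw [Finset.prod_pow_eq_pow_sum]
    congr 1
    rw [Finset.sum_add_distrib, Finset.sum_const, Finset.card_univ, Fintype.card_fin,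
      smul_eq_mul, Fin.sum_univ_eq_sum_range (fun i => i), Finset.sum_range_id]
  rw [hdet]
  ring
end

section
/- Let N ≥ 1 be an integer and ω₁,…,ω_N pairwise distinct reals. Let G be the N×N real matrix with entries G_{i,j} = (i−1)! · e^{ω_j} · L_{i−1}(−ω_j), 1 ≤ i,j ≤ N. Then G is invertible, and for every index i with 1 ≤ i ≤ N and every real u, ∑_{j=1}^N (j−1)! · L_{j−1}(u) · (G^{−1})_{i,j} = e^{−ω_i} · ∏_{τ≠i} ((−u−ω_τ)/(ω_i−ω_τ)). (This is the polynomial identity characterizing the inverse moment matrix in the case L = 0.) -/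
open MeasureTheory Finset Matrix

noncomputable def Qpoly (n : ℕ) : Polynomial ℝ :=
  ∑ k ∈ Finset.range (n+1), Polynomial.C ((n.choose k : ℝ) / (k.factorial : ℝ)) * Polynomial.X ^ k

lemma Qpoly_eval (n : ℕ) (y : ℝ) : (Qpoly n).eval y = laguerre n (-y) := by
  simp only [Qpoly, laguerre, Polynomial.eval_finset_sum, Polynomial.eval_mul, Polynomial.eval_C,
    Polynomial.eval_pow, Polynomial.eval_X, neg_neg]
  exact Finset.sum_congr rfl fun k _ => by ring

lemma Qpoly_degree (n : ℕ) : (Qpoly n).degree ≤ n := by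
  refine (Polynomial.degree_sum_le _ _).trans ?_
  simp only [Finset.sup_le_iff, Finset.mem_range]
  intro k hk
  refine (Polynomial.degree_mul_le _ _).trans ?_
  refine le_trans (add_le_add Polynomial.degree_C_le (Polynomial.degree_X_pow_le k)) ?_
  simpa using (WithBot.coe_le_coe.mpr (Nat.lt_succ_iff.mp hk))

lemma interp {N : ℕ} (ω : Fin N → ℝ) (hdist : Function.Injective ω) (j : Fin N) (v : ℝ) :
    (Qpoly (j : ℕ)).eval v =
      ∑ t : Fin N, (Qpoly (j : ℕ)).eval (ω t) *
        ∏ τ ∈ Finset.univ.erase t, ((v - ω τ) / (ω t - ω τ)) := by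
  have hdeg : (Qpoly (j : ℕ)).degree < (Finset.univ : Finset (Fin N)).card := by
    refine lt_of_le_of_lt (Qpoly_degree _) ?_
    simp only [Finset.card_univ, Fintype.card_fin]
    exact_mod_cast j.2
  have h := Lagrange.eq_interpolate (v := ω) (Set.injOn_of_injective hdist) hdeg
  conv_lhs => rw [h]
  rw [Lagrange.interpolate_apply, Polynomial.eval_finset_sum]
  refine Finset.sum_congr rfl fun t _ => ?_
  rw [Polynomial.eval_mul, Polynomial.eval_C, Lagrange.basis, Polynomial.eval_prod]
  congr 1
  refine Finset.prod_congr rfl fun τ _ => ?_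
  simp [Lagrange.basisDivisor, div_eq_inv_mul, mul_comm]

noncomputable def Amat (N : ℕ) : Matrix (Fin N) (Fin N) ℝ :=
  Matrix.of fun i k =>
    if (k : ℕ) ≤ (i : ℕ) then ((i : ℕ).factorial : ℝ) * ((i : ℕ).choose k) / ((k : ℕ).factorial : ℝ)
    else 0

lemma Gmat_eq (N : ℕ) (ω : Fin N → ℝ) :
    Gmat N ω = Amat N * (Matrix.vandermonde ω)ᵀ * Matrix.diagonal (fun j => Real.exp (ω j)) := by
  ext i j
  rw [Matrix.mul_diagonal, Matrix.mul_apply]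
  simp only [Gmat, Amat, Matrix.of_apply, Matrix.transpose_apply, Matrix.vandermonde_apply]
  rw [Fin.sum_univ_eq_sum_range
    (fun k => (if k ≤ (i : ℕ) then ((i:ℕ).factorial : ℝ) * ((i:ℕ).choose k) / (k.factorial : ℝ) else 0) * ω j ^ k)]
  rw [← Finset.sum_subset (Finset.range_subset_range.mpr i.2)
    (by intro k _ hk; rw [if_neg (by simpa [Nat.lt_succ_iff] using fun h => hk (Finset.mem_range.mpr (Nat.lt_succ_of_le h)))]; ring)]
  rw [laguerre, Finset.mul_sum, Finset.sum_mul]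
  refine Finset.sum_congr rfl fun k hk => ?_
  rw [if_pos (Nat.lt_succ_iff.mp (Finset.mem_range.mp hk))]
  simp only [neg_neg]
  ring

lemma Gmat_det_ne_zero (N : ℕ) (ω : Fin N → ℝ) (hdist : Function.Injective ω) :
    (Gmat N ω).det ≠ 0 := by
  rw [Gmat_eq, Matrix.det_mul, Matrix.det_mul, Matrix.det_transpose, Matrix.det_diagonal]
  have hA : (Amat N).det = 1 := by
    rw [Matrix.det_of_lowerTriangular]
    · refine Finset.prod_eq_one fun i _ => ?_
      simp only [Amat, Matrix.of_apply, le_refl, if_true, Nat.choose_self, Nat.cast_one, mul_one]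
      exact div_self (by exact_mod_cast (Nat.factorial_ne_zero _))
    · intro i k h
      have h2 : (i : ℕ) < (k : ℕ) := h
      simp only [Amat, Matrix.of_apply]
      rw [if_neg (Nat.not_le.mpr h2)]
  rw [hA, one_mul]
  refine mul_ne_zero (Matrix.det_vandermonde_ne_zero_iff.mpr hdist) ?_
  exact Finset.prod_ne_zero_iff.mpr fun j _ => (Real.exp_pos _).ne'

theorem statement15 (N : ℕ) (hN : 1 ≤ N) (ω : Fin N → ℝ) (hdist : Function.Injective ω) :
    IsUnit (Gmat N ω).det ∧
      ∀ (i : Fin N) (u : ℝ),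
        (∑ j : Fin N, ((j : ℕ).factorial : ℝ) * laguerre (j : ℕ) u * (Gmat N ω)⁻¹ i j) =
          Real.exp (-ω i) * ∏ τ ∈ Finset.univ.erase i, ((-u - ω τ) / (ω i - ω τ)) := by
  have hdet := Gmat_det_ne_zero N ω hdist
  have hU : IsUnit (Gmat N ω).det := isUnit_iff_ne_zero.mpr hdet
  refine ⟨hU, fun i u => ?_⟩
  set G := Gmat N ω with hG
  set c : Fin N → ℝ := fun t =>
    Real.exp (-ω t) * ∏ τ ∈ Finset.univ.erase t, ((-u - ω τ) / (ω t - ω τ)) with hc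
  set b : Fin N → ℝ := fun j => ((j : ℕ).factorial : ℝ) * laguerre (j : ℕ) u with hb
  have key : G.mulVec c = b := by
    funext j
    rw [Matrix.mulVec, dotProduct]
    have : ∀ t : Fin N, G j t * c t =
        ((j : ℕ).factorial : ℝ) * ((Qpoly (j : ℕ)).eval (ω t) *
          ∏ τ ∈ Finset.univ.erase t, ((-u - ω τ) / (ω t - ω τ))) := by
      intro t
      simp only [hG, hc, Gmat, Matrix.of_apply, Qpoly_eval]
      rw [Real.exp_neg]
      field_simp [Real.exp_ne_zero]
    rw [Finset.sum_congr rfl fun t _ => this t, ← Finset.mul_sum]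
    rw [← interp ω hdist j (-u), Qpoly_eval, neg_neg, hb]
  have : (∑ j : Fin N, ((j : ℕ).factorial : ℝ) * laguerre (j : ℕ) u * G⁻¹ i j) =
      (G⁻¹.mulVec b) i := by
    rw [Matrix.mulVec, dotProduct]
    exact Finset.sum_congr rfl fun j _ => by rw [hb]; ring
  rw [this, ← key, Matrix.mulVec_mulVec, Matrix.nonsing_inv_mul _ hU, Matrix.one_mulVec]
end
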